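/- (Helstrom bound, upper bound) Let d ≥ 1 and let σ₀, σ₁ be d×d complex density matrices. For every two-outcome POVM (Λ₀, Λ₁) on ℂ^d, (1/2)·Re Tr(Λ₀ σ₀) + (1/2)·Re Tr(Λ₁ σ₁) ≤ 1/2 + (1/4)·Σ_i |λ_i|, where λ_1, …, λ_d are the eigenvalues of the Hermitian matrix σ₀ − σ₁. -/

import Mathlib

open Matrix Complex
open scoped ComplexOrder

/-- Helstrom bound, upper bound: for `d×d` density matrices `σ₀, σ₁` and any
two-outcome POVM `(Λ₀, Λ₁)` on `ℂ^d`,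
`(1/2)·Re Tr(Λ₀σ₀) + (1/2)·Re Tr(Λ₁σ₁) ≤ 1/2 + (1/4)·Σᵢ |λᵢ|`, where the `λᵢ` are the
eigenvalues of the Hermitian matrix `σ₀ − σ₁`. -/

lemma diag_nonneg' {n : Type*} [Fintype n] [DecidableEq n] {A : Matrix n n ℂ}
    (hA : A.PosSemidef) (i : n) : 0 ≤ A i i := by
  have h := hA.dotProduct_mulVec_nonneg (Pi.single i 1)
  rw [Matrix.mulVec_single] at h
  simpa [dotProduct, Pi.single_apply, apply_ite] using h

theorem stmt5 (d : ℕ) (hd : 1 ≤ d)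
    (σ₀ σ₁ : Matrix (Fin d) (Fin d) ℂ)
    (hσ₀ : σ₀.PosSemidef) (hσ₀t : σ₀.trace = 1)
    (hσ₁ : σ₁.PosSemidef) (hσ₁t : σ₁.trace = 1)
    (Λ₀ Λ₁ : Matrix (Fin d) (Fin d) ℂ)
    (hΛ₀ : Λ₀.PosSemidef) (hΛ₁ : Λ₁.PosSemidef) (hΛ : Λ₀ + Λ₁ = 1)
    (hH : (σ₀ - σ₁).IsHermitian) :
    (1/2) * (Λ₀ * σ₀).trace.re + (1/2) * (Λ₁ * σ₁).trace.re
      ≤ 1/2 + (1/4) * ∑ i, |hH.eigenvalues i| := by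
  set U : Matrix (Fin d) (Fin d) ℂ := (hH.eigenvectorUnitary : Matrix (Fin d) (Fin d) ℂ) with hUdef
  have hUstar : star U * U = 1 :=
    Matrix.mem_unitaryGroup_iff'.mp hH.eigenvectorUnitary.2
  have hUstar2 : U * star U = 1 :=
    Matrix.mem_unitaryGroup_iff.mp hH.eigenvectorUnitary.2
  set D : Matrix (Fin d) (Fin d) ℂ :=
    Matrix.diagonal (RCLike.ofReal ∘ hH.eigenvalues) with hDdef
  have hspec : σ₀ - σ₁ = U * D * star U := hH.spectral_theorem
  set M : Matrix (Fin d) (Fin d) ℂ := Uᴴ * Λ₀ * U with hMdef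
  have hMpsd : M.PosSemidef := hΛ₀.conjTranspose_mul_mul_same U
  have hNpsd : (Uᴴ * Λ₁ * U).PosSemidef := hΛ₁.conjTranspose_mul_mul_same U
  have hMN : M + Uᴴ * Λ₁ * U = 1 := by
    rw [hMdef]
    rw [show Uᴴ * Λ₀ * U + Uᴴ * Λ₁ * U = Uᴴ * (Λ₀ + Λ₁) * U by noncomm_ring]
    rw [hΛ, mul_one]
    exact hUstar
  -- diagonal entries of M
  have hMge : ∀ i, 0 ≤ M i i := diag_nonneg' hMpsd
  have hMle : ∀ i, M i i ≤ 1 := by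
    intro i
    have h := diag_nonneg' hNpsd i
    have h1 : (Uᴴ * Λ₁ * U) i i = 1 - M i i := by
      have := congrFun (congrFun hMN i) i
      simp only [Matrix.add_apply, Matrix.one_apply_eq] at this
      linear_combination this
    rw [h1] at h
    exact sub_nonneg.mp h
  have hMreal : ∀ i, M i i = ((M i i).re : ℂ) := by
    intro i
    have := hMge i
    rw [Complex.le_def] at this
    simp only [Complex.zero_re, Complex.zero_im] at this
    exact Complex.ext rfl this.2.symm
  have hm0 : ∀ i, 0 ≤ (M i i).re := fun i => by
    have := hMge i; rw [Complex.le_def] at this; simpa using this.1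
  have hm1 : ∀ i, (M i i).re ≤ 1 := fun i => by
    have := hMle i; rw [Complex.le_def] at this; simpa using this.1
  -- trace of Λ₀ * (σ₀ - σ₁)
  have htr : (Λ₀ * (σ₀ - σ₁)).trace = ∑ i, M i i * (hH.eigenvalues i : ℂ) := by
    conv_lhs => rw [hspec]
    rw [show Λ₀ * (U * D * star U) = Λ₀ * U * D * star U by noncomm_ring,
      Matrix.trace_mul_comm, show star U * (Λ₀ * U * D) = (Uᴴ * Λ₀ * U) * D by
        simp only [Matrix.star_eq_conjTranspose]; noncomm_ring, ← hMdef, hDdef]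
    simp [Matrix.trace, Matrix.diag, Matrix.mul_diagonal]
  -- sum of eigenvalues is zero
  have htrΔ : (σ₀ - σ₁).trace = 0 := by
    rw [Matrix.trace_sub, hσ₀t, hσ₁t, sub_self]
  have hsum0 : ∑ i, hH.eigenvalues i = 0 := by
    have h1 : (σ₀ - σ₁).trace = ∑ i, (hH.eigenvalues i : ℂ) := by
      conv_lhs => rw [hspec]
      rw [Matrix.trace_mul_cycle, hUstar, one_mul, hDdef]
      simp [Matrix.trace, Matrix.diag]
    rw [htrΔ] at h1
    have : ((∑ i, hH.eigenvalues i : ℝ) : ℂ) = 0 := by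
      push_cast; rw [← h1]
    exact_mod_cast this
  -- rewrite LHS
  have hΛ₁eq : Λ₁ = 1 - Λ₀ := by rw [← hΛ, add_sub_cancel_left]
  have hkey : (Λ₀ * σ₀).trace.re + (Λ₁ * σ₁).trace.re
      = 1 + (Λ₀ * (σ₀ - σ₁)).trace.re := by
    have h2 : (Λ₁ * σ₁).trace = 1 - (Λ₀ * σ₁).trace := by
      rw [hΛ₁eq, Matrix.sub_mul, Matrix.one_mul, Matrix.trace_sub, hσ₁t]
    have h3 : (Λ₀ * (σ₀ - σ₁)).trace = (Λ₀ * σ₀).trace - (Λ₀ * σ₁).trace := by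
      rw [Matrix.mul_sub, Matrix.trace_sub]
    rw [h2, h3]
    simp [Complex.sub_re]
    ring
  -- bound the trace term
  have hbound : (Λ₀ * (σ₀ - σ₁)).trace.re ≤ (1/2) * ∑ i, |hH.eigenvalues i| := by
    rw [htr]
    have hre : (∑ i, M i i * (hH.eigenvalues i : ℂ)).re
        = ∑ i, (M i i).re * hH.eigenvalues i := by
      rw [Complex.re_sum]
      refine Finset.sum_congr rfl fun i _ => ?_
      rw [hMreal i]
      simp [← Complex.ofReal_mul]
    rw [hre]
    have hle : ∀ i ∈ Finset.univ, (M i i).re * hH.eigenvalues i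
        ≤ (|hH.eigenvalues i| + hH.eigenvalues i) / 2 := by
      intro i _
      rcases le_or_gt 0 (hH.eigenvalues i) with h | h
      · rw [_root_.abs_of_nonneg h]
        nlinarith [hm1 i, hm0 i]
      · rw [_root_.abs_of_nonpos h.le]
        nlinarith [hm0 i, hm1 i]
    calc ∑ i, (M i i).re * hH.eigenvalues i
        ≤ ∑ i, (|hH.eigenvalues i| + hH.eigenvalues i) / 2 := Finset.sum_le_sum hle
      _ = (1/2) * ∑ i, |hH.eigenvalues i| := by
          rw [← Finset.sum_div, Finset.sum_add_distrib, hsum0, add_zero]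
          ring
  linarith [hkey, hbound]
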